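/- Let Z₁, Z₂, Z₃ be independent Gumbel random variables with location parameters α₁, α₂, α₃ and common scale β > 0, and write s_i = exp(α_i/β). Then P(Z₁ > Z₂ > Z₃) = (s₁/(s₁+s₂+s₃)) · (s₂/(s₂+s₃)); equivalently, P(Z₁ > Z₂ > Z₃) = P(Z₁ > max(Z₂, Z₃)) · P(Z₂ > Z₃). -/

import Mathlib

open MeasureTheory ProbabilityTheory Real Filter Set Topology

namespace GumbelAux

noncomputable def ψ (β c : ℝ) (z : ℝ) : ℝ :=
  c / β * (exp (-z / β) * exp (-(c * exp (-z / β))))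

lemma measurable_psi (β c : ℝ) : Measurable (ψ β c) := by
  unfold ψ; fun_prop

lemma psi_nonneg {β : ℝ} (hβ : 0 < β) {c : ℝ} (hc : 0 < c) (z : ℝ) : 0 ≤ ψ β c z := by
  unfold ψ; positivity

lemma hasDerivAt_phi {β : ℝ} (hβ : 0 < β) (c z : ℝ) :
    HasDerivAt (fun z => exp (-(c * exp (-z / β)))) (ψ β c z) z := by
  have h1 : HasDerivAt (fun z : ℝ => -z / β) (-1 / β) z := by
    simpa using (hasDerivAt_id z).neg.div_const β
  have h3 := ((h1.exp.const_mul c).neg).exp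
  convert h3 using 1
  · rfl
  unfold ψ
  simp only [Pi.neg_apply]
  field_simp

lemma tendsto_phi_atTop {β : ℝ} (hβ : 0 < β) (c : ℝ) :
    Tendsto (fun z => exp (-(c * exp (-z / β)))) atTop (𝓝 1) := by
  have h0 : Tendsto (fun z : ℝ => -z / β) atTop atBot :=
    Tendsto.atBot_div_const hβ tendsto_neg_atTop_atBot
  have h1 : Tendsto (fun z : ℝ => exp (-z / β)) atTop (𝓝 0) := tendsto_exp_atBot.comp h0
  have h2 : Tendsto (fun z : ℝ => -(c * exp (-z / β))) atTop (𝓝 0) := by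
    simpa using ((h1.const_mul c).neg)
  have := (Real.continuous_exp.tendsto 0).comp h2
  simpa [Function.comp_def] using this

lemma tendsto_phi_atBot {β : ℝ} (hβ : 0 < β) {c : ℝ} (hc : 0 < c) :
    Tendsto (fun z => exp (-(c * exp (-z / β)))) atBot (𝓝 0) := by
  have h0 : Tendsto (fun z : ℝ => -z / β) atBot atTop :=
    Tendsto.atTop_div_const hβ tendsto_neg_atBot_atTop
  have h1 : Tendsto (fun z : ℝ => exp (-z / β)) atBot atTop := tendsto_exp_atTop.comp h0
  have h2 : Tendsto (fun z : ℝ => -(c * exp (-z / β))) atBot atBot := by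
    have := h1.const_mul_atTop hc
    exact tendsto_neg_atTop_atBot.comp this
  exact tendsto_exp_atBot.comp h2

lemma integrable_psi {β : ℝ} (hβ : 0 < β) {c : ℝ} (hc : 0 < c) : Integrable (ψ β c) := by
  have hIoi : IntegrableOn (ψ β c) (Ioi 0) :=
    integrableOn_Ioi_deriv_of_nonneg' (fun x _ => hasDerivAt_phi hβ c x)
      (fun x _ => psi_nonneg hβ hc x) (tendsto_phi_atTop hβ c)
  have hneg : ∀ x : ℝ, HasDerivAt (fun x : ℝ => -(exp (-(c * exp (-(-x) / β)))))
      (ψ β c (-x)) x := by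
    intro x
    have h := (hasDerivAt_phi hβ c (-x)).scomp x (hasDerivAt_neg x)
    simpa [Function.comp_def, Pi.neg_def] using h.neg
  have hIci : IntegrableOn (fun x => ψ β c (-x)) (Ici 0) := by
    have h : IntegrableOn (fun x => ψ β c (-x)) (Ioi (0 : ℝ)) :=
      integrableOn_Ioi_deriv_of_nonneg' (fun x _ => hneg x)
      (fun x _ => psi_nonneg hβ hc (-x))
      (by simpa using ((tendsto_phi_atBot hβ hc).comp tendsto_neg_atTop_atBot).neg)
    exact (integrableOn_Ici_iff_integrableOn_Ioi enorm_ne_top).2 h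
  have hIic : IntegrableOn (ψ β c) (Iic 0) := by
    have hiff := MeasurePreserving.integrableOn_comp_preimage
      (Measure.measurePreserving_neg (volume : Measure ℝ))
      (Homeomorph.neg ℝ).measurableEmbedding (f := ψ β c) (s := Iic (0 : ℝ))
    apply hiff.1
    have hset : (fun x : ℝ => -x) ⁻¹' Iic (0 : ℝ) = Ici 0 := by
      ext x; simp
    rw [hset]
    exact hIci
  rw [← integrableOn_univ, ← Set.Iic_union_Ioi (a := (0 : ℝ))]
  exact hIic.union hIoi

lemma integral_psi {β : ℝ} (hβ : 0 < β) {c : ℝ} (hc : 0 < c) : ∫ z, ψ β c z = 1 := by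
  have := integral_of_hasDerivAt_of_tendsto (fun x => hasDerivAt_phi hβ c x)
    (integrable_psi hβ hc) (tendsto_phi_atBot hβ hc) (tendsto_phi_atTop hβ c)
  simpa using this

lemma psi_mul {β : ℝ} (hβ : 0 < β) {c a : ℝ} (hc : 0 < c) (ha : 0 ≤ a) (z : ℝ) :
    ψ β c z * exp (-(a * exp (-z / β))) = (c / (c + a)) * ψ β (c + a) z := by
  unfold ψ
  have h : exp (-((c + a) * exp (-z / β)))
      = exp (-(c * exp (-z / β))) * exp (-(a * exp (-z / β))) := by
    rw [← exp_add]; ring_nf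
  rw [h]
  have hca : c + a ≠ 0 := by positivity
  have hβ' : β ≠ 0 := ne_of_gt hβ
  field_simp

lemma integrable_psi_mul {β : ℝ} (hβ : 0 < β) {c a : ℝ} (hc : 0 < c) (ha : 0 ≤ a) :
    Integrable (fun z => ψ β c z * exp (-(a * exp (-z / β)))) := by
  have h : (fun z => ψ β c z * exp (-(a * exp (-z / β))))
      = fun z => (c / (c + a)) * ψ β (c + a) z := funext (psi_mul hβ hc ha)
  rw [h]
  exact (integrable_psi hβ (by positivity)).const_mul _

lemma integral_psi_mul {β : ℝ} (hβ : 0 < β) {c a : ℝ} (hc : 0 < c) (ha : 0 ≤ a) :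
    ∫ z, ψ β c z * exp (-(a * exp (-z / β))) = c / (c + a) := by
  have h : (fun z => ψ β c z * exp (-(a * exp (-z / β))))
      = fun z => (c / (c + a)) * ψ β (c + a) z := funext (psi_mul hβ hc ha)
  rw [h, integral_const_mul, integral_psi hβ (by positivity), mul_one]

end GumbelAux

theorem gumbel_plackett_luce
    {Ω : Type*} [MeasureSpace Ω] [IsProbabilityMeasure (ℙ : Measure Ω)]
    (Z : Fin 3 → Ω → ℝ) (α : Fin 3 → ℝ) (β : ℝ) (hβ : 0 < β)
    (hmeas : ∀ i, Measurable (Z i))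
    (hindep : iIndepFun Z ℙ)
    (hcdf : ∀ i z, (ℙ {ω | Z i ω ≤ z}).toReal = exp (-exp (-(z - α i) / β)))
    (s : Fin 3 → ℝ) (hs : ∀ i, s i = exp (α i / β)) :
    (ℙ {ω | Z 0 ω > Z 1 ω ∧ Z 1 ω > Z 2 ω}).toReal =
        (s 0 / (s 0 + s 1 + s 2)) * (s 1 / (s 1 + s 2)) ∧
      (ℙ {ω | Z 0 ω > Z 1 ω ∧ Z 1 ω > Z 2 ω}).toReal =
        (ℙ {ω | Z 0 ω > max (Z 1 ω) (Z 2 ω)}).toReal *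
          (ℙ {ω | Z 1 ω > Z 2 ω}).toReal := by
  classical
  have hspos : ∀ i, 0 < s i := fun i => by rw [hs]; exact exp_pos _
  let μ : Fin 3 → Measure ℝ := fun i => Measure.map (Z i) ℙ
  haveI h0 : IsProbabilityMeasure (μ 0) := Measure.isProbabilityMeasure_map (hmeas 0).aemeasurable
  haveI h1 : IsProbabilityMeasure (μ 1) := Measure.isProbabilityMeasure_map (hmeas 1).aemeasurable
  haveI h2 : IsProbabilityMeasure (μ 2) := Measure.isProbabilityMeasure_map (hmeas 2).aemeasurable
  have hF : ∀ i x, μ i (Iic x) = ENNReal.ofReal (exp (-(s i * exp (-x / β)))) := by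
    intro i x
    have h1 : μ i (Iic x) = ℙ {ω | Z i ω ≤ x} := by
      show Measure.map (Z i) ℙ (Iic x) = _
      rw [Measure.map_apply (hmeas i) measurableSet_Iic]; rfl
    have h3 : exp (-(x - α i) / β) = s i * exp (-x / β) := by
      rw [hs, ← exp_add]; congr 1; field_simp; ring
    have h2 := hcdf i x
    rw [h3] at h2
    rw [h1, ← h2, ENNReal.ofReal_toReal (measure_ne_top _ _)]
  have hdens : ∀ i, μ i = (volume : Measure ℝ).withDensity
      (fun z => ENNReal.ofReal (GumbelAux.ψ β (s i) z)) := by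
    intro i
    refine Measure.ext_of_Iic (μ i) _ (fun a => ?_)
    rw [hF i a, withDensity_apply _ measurableSet_Iic]
    rw [← ofReal_integral_eq_lintegral_ofReal
      ((GumbelAux.integrable_psi hβ (hspos i)).integrableOn)
      (ae_of_all _ fun z => GumbelAux.psi_nonneg hβ (hspos i) z)]
    congr 1
    have hFTC := integral_Iic_of_hasDerivAt_of_tendsto' (a := a)
      (fun x _ => GumbelAux.hasDerivAt_phi hβ (s i) x)
      ((GumbelAux.integrable_psi hβ (hspos i)).integrableOn)
      (GumbelAux.tendsto_phi_atBot hβ (hspos i))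
    rw [hFTC, sub_zero]
  have hIio : ∀ i x, μ i (Iio x) = ENNReal.ofReal (exp (-(s i * exp (-x / β)))) := by
    intro i x
    have h : μ i (Iio x) = μ i (Iic x) := by
      rw [hdens i, withDensity_apply _ measurableSet_Iio, withDensity_apply _ measurableSet_Iic,
        setLIntegral_congr Iio_ae_eq_Iic]
    rw [h, hF]
  have hIoi : ∀ i x, μ i (Ioi x) = ENNReal.ofReal (1 - exp (-(s i * exp (-x / β)))) := by
    intro i x
    haveI : IsProbabilityMeasure (μ i) := Measure.isProbabilityMeasure_map (hmeas i).aemeasurable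
    have h : μ i (Ioi x) = 1 - μ i (Iic x) := by
      rw [← Set.compl_Iic, measure_compl measurableSet_Iic (measure_ne_top _ _), measure_univ]
    rw [h, hF, ENNReal.ofReal_sub _ (exp_nonneg _), ENNReal.ofReal_one]
  have law_pair : ∀ i j : Fin 3, i ≠ j →
      Measure.map (fun ω => (Z i ω, Z j ω)) ℙ = (μ i).prod (μ j) := fun i j hij =>
    (indepFun_iff_map_prod_eq_prod_map_map (hmeas i).aemeasurable (hmeas j).aemeasurable).1
      (hindep.indepFun hij)
  have law_triple : ∀ i j k : Fin 3, i ≠ j → i ≠ k → j ≠ k →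
      Measure.map (fun ω => (Z i ω, (Z j ω, Z k ω))) ℙ = (μ i).prod ((μ j).prod (μ k)) := by
    intro i j k hij hik hjk
    have hpair : IndepFun (Z i) (fun ω => (Z j ω, Z k ω)) ℙ :=
      (hindep.indepFun_prodMk hmeas j k i hij.symm hik.symm).symm
    rw [(indepFun_iff_map_prod_eq_prod_map_map (hmeas i).aemeasurable
      ((hmeas j).prodMk (hmeas k)).aemeasurable).1 hpair, law_pair j k hjk]
  have key : ∀ (i : Fin 3) (g : ℝ → ℝ), Measurable g → (∀ z, 0 ≤ g z) →
      Integrable (fun z => GumbelAux.ψ β (s i) z * g z) →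
      (∫⁻ x, ENNReal.ofReal (g x) ∂(μ i))
        = ENNReal.ofReal (∫ z, GumbelAux.ψ β (s i) z * g z) := by
    intro i g hgm hg0 hint
    rw [hdens i, lintegral_withDensity_eq_lintegral_mul _
      (GumbelAux.measurable_psi β (s i)).ennreal_ofReal hgm.ennreal_ofReal]
    rw [ofReal_integral_eq_lintegral_ofReal hint
      (ae_of_all _ fun z => mul_nonneg (GumbelAux.psi_nonneg hβ (hspos i) z) (hg0 z))]
    refine lintegral_congr fun x => ?_
    simp [ENNReal.ofReal_mul (GumbelAux.psi_nonneg hβ (hspos i) x)]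
  have hF_le_one : ∀ (c x : ℝ), 0 ≤ c → exp (-(c * exp (-x / β))) ≤ 1 := by
    intro c x hc
    rw [Real.exp_le_one_iff]
    exact neg_nonpos.2 (mul_nonneg hc (exp_nonneg _))
  -- Event A
  have hSA : MeasurableSet {p : ℝ × ℝ × ℝ | p.1 < p.2.1 ∧ p.2.2 < p.1} :=
    (measurableSet_lt measurable_fst (measurable_fst.comp measurable_snd)).inter
      (measurableSet_lt (measurable_snd.comp measurable_snd) measurable_fst)
  have hA1 : ℙ {ω | Z 0 ω > Z 1 ω ∧ Z 1 ω > Z 2 ω}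
      = ∫⁻ x, μ 0 (Ioi x) * μ 2 (Iio x) ∂(μ 1) := by
    have hApre : {ω | Z 0 ω > Z 1 ω ∧ Z 1 ω > Z 2 ω}
        = (fun ω => (Z 1 ω, (Z 0 ω, Z 2 ω))) ⁻¹'
          {p : ℝ × ℝ × ℝ | p.1 < p.2.1 ∧ p.2.2 < p.1} := rfl
    rw [hApre, ← Measure.map_apply ((hmeas 1).prodMk ((hmeas 0).prodMk (hmeas 2))) hSA,
      law_triple 1 0 2 (by decide) (by decide) (by decide), Measure.prod_apply hSA]
    refine lintegral_congr fun x => ?_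
    have hpre : (Prod.mk x ⁻¹' {p : ℝ × ℝ × ℝ | p.1 < p.2.1 ∧ p.2.2 < p.1})
        = Ioi x ×ˢ Iio x := by
      ext q; simp [Set.mem_prod]
    rw [hpre, Measure.prod_prod]
  have hgA_meas : Measurable (fun x : ℝ =>
      (1 - exp (-(s 0 * exp (-x / β)))) * exp (-(s 2 * exp (-x / β)))) := by fun_prop
  have hgA_nonneg : ∀ x, 0 ≤ (1 - exp (-(s 0 * exp (-x / β)))) * exp (-(s 2 * exp (-x / β))) :=
    fun x => mul_nonneg (sub_nonneg.2 (hF_le_one _ _ (hspos 0).le)) (exp_nonneg _)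
  have hident_A : (fun z => GumbelAux.ψ β (s 1) z *
        ((1 - exp (-(s 0 * exp (-z / β)))) * exp (-(s 2 * exp (-z / β)))))
      = fun z => GumbelAux.ψ β (s 1) z * exp (-(s 2 * exp (-z / β)))
          - GumbelAux.ψ β (s 1) z * exp (-((s 0 + s 2) * exp (-z / β))) := by
    funext z
    have h : exp (-((s 0 + s 2) * exp (-z / β)))
        = exp (-(s 0 * exp (-z / β))) * exp (-(s 2 * exp (-z / β))) := by
      rw [← exp_add]; ring_nf
    rw [h]; ring
  have hint_A : Integrable (fun z => GumbelAux.ψ β (s 1) z *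
      ((1 - exp (-(s 0 * exp (-z / β)))) * exp (-(s 2 * exp (-z / β))))) := by
    rw [hident_A]
    exact (GumbelAux.integrable_psi_mul hβ (hspos 1) (hspos 2).le).sub
      (GumbelAux.integrable_psi_mul hβ (hspos 1) (by have := hspos 0; have := hspos 2; linarith))
  have hval_A : (∫ z, GumbelAux.ψ β (s 1) z *
        ((1 - exp (-(s 0 * exp (-z / β)))) * exp (-(s 2 * exp (-z / β)))))
      = s 1 / (s 1 + s 2) - s 1 / (s 1 + (s 0 + s 2)) := by
    rw [hident_A, integral_sub (GumbelAux.integrable_psi_mul hβ (hspos 1) (hspos 2).le)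
      (GumbelAux.integrable_psi_mul hβ (hspos 1) (by have := hspos 0; have := hspos 2; linarith)),
      GumbelAux.integral_psi_mul hβ (hspos 1) (hspos 2).le,
      GumbelAux.integral_psi_mul hβ (hspos 1) (by have := hspos 0; have := hspos 2; linarith)]
  have hPA : (ℙ {ω | Z 0 ω > Z 1 ω ∧ Z 1 ω > Z 2 ω}).toReal
      = s 1 / (s 1 + s 2) - s 1 / (s 1 + (s 0 + s 2)) := by
    rw [hA1]
    have heq : ∫⁻ x, μ 0 (Ioi x) * μ 2 (Iio x) ∂(μ 1)
        = ∫⁻ x, ENNReal.ofReal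
            ((1 - exp (-(s 0 * exp (-x / β)))) * exp (-(s 2 * exp (-x / β)))) ∂(μ 1) := by
      refine lintegral_congr fun x => ?_
      rw [hIoi 0 x, hIio 2 x, ← ENNReal.ofReal_mul (sub_nonneg.2 (hF_le_one _ _ (hspos 0).le))]
    rw [heq, key 1 _ hgA_meas hgA_nonneg hint_A, ENNReal.toReal_ofReal
      (integral_nonneg fun z => mul_nonneg (GumbelAux.psi_nonneg hβ (hspos 1) z)
        (hgA_nonneg z)), hval_A]
  -- Event B
  have hSB : MeasurableSet {p : ℝ × ℝ × ℝ | p.2.1 < p.1 ∧ p.2.2 < p.1} :=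
    (measurableSet_lt (measurable_fst.comp measurable_snd) measurable_fst).inter
      (measurableSet_lt (measurable_snd.comp measurable_snd) measurable_fst)
  have hB1 : ℙ {ω | Z 0 ω > max (Z 1 ω) (Z 2 ω)}
      = ∫⁻ x, μ 1 (Iio x) * μ 2 (Iio x) ∂(μ 0) := by
    have hBpre : {ω | Z 0 ω > max (Z 1 ω) (Z 2 ω)}
        = (fun ω => (Z 0 ω, (Z 1 ω, Z 2 ω))) ⁻¹'
          {p : ℝ × ℝ × ℝ | p.2.1 < p.1 ∧ p.2.2 < p.1} := by
      ext ω; simp [max_lt_iff]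
    rw [hBpre, ← Measure.map_apply ((hmeas 0).prodMk ((hmeas 1).prodMk (hmeas 2))) hSB,
      law_triple 0 1 2 (by decide) (by decide) (by decide), Measure.prod_apply hSB]
    refine lintegral_congr fun x => ?_
    have hpre : (Prod.mk x ⁻¹' {p : ℝ × ℝ × ℝ | p.2.1 < p.1 ∧ p.2.2 < p.1})
        = Iio x ×ˢ Iio x := by
      ext q; simp [Set.mem_prod]
    rw [hpre, Measure.prod_prod]
  have hgB_meas : Measurable (fun x : ℝ =>
      exp (-(s 1 * exp (-x / β))) * exp (-(s 2 * exp (-x / β)))) := by fun_prop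
  have hgB_nonneg : ∀ x : ℝ, 0 ≤ exp (-(s 1 * exp (-x / β))) * exp (-(s 2 * exp (-x / β))) :=
    fun x => mul_nonneg (exp_nonneg _) (exp_nonneg _)
  have hident_B : (fun z => GumbelAux.ψ β (s 0) z *
        (exp (-(s 1 * exp (-z / β))) * exp (-(s 2 * exp (-z / β)))))
      = fun z => GumbelAux.ψ β (s 0) z * exp (-((s 1 + s 2) * exp (-z / β))) := by
    funext z
    have h : exp (-((s 1 + s 2) * exp (-z / β)))
        = exp (-(s 1 * exp (-z / β))) * exp (-(s 2 * exp (-z / β))) := by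
      rw [← exp_add]; ring_nf
    rw [h]
  have hint_B : Integrable (fun z => GumbelAux.ψ β (s 0) z *
      (exp (-(s 1 * exp (-z / β))) * exp (-(s 2 * exp (-z / β))))) := by
    rw [hident_B]
    exact GumbelAux.integrable_psi_mul hβ (hspos 0) (by have := hspos 1; have := hspos 2; linarith)
  have hval_B : (∫ z, GumbelAux.ψ β (s 0) z *
        (exp (-(s 1 * exp (-z / β))) * exp (-(s 2 * exp (-z / β)))))
      = s 0 / (s 0 + (s 1 + s 2)) := by
    rw [hident_B, GumbelAux.integral_psi_mul hβ (hspos 0) (by have := hspos 1; have := hspos 2; linarith)]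
  have hPB : (ℙ {ω | Z 0 ω > max (Z 1 ω) (Z 2 ω)}).toReal = s 0 / (s 0 + (s 1 + s 2)) := by
    rw [hB1]
    have heq : ∫⁻ x, μ 1 (Iio x) * μ 2 (Iio x) ∂(μ 0)
        = ∫⁻ x, ENNReal.ofReal
            (exp (-(s 1 * exp (-x / β))) * exp (-(s 2 * exp (-x / β)))) ∂(μ 0) := by
      refine lintegral_congr fun x => ?_
      rw [hIio 1 x, hIio 2 x, ← ENNReal.ofReal_mul (exp_nonneg _)]
    rw [heq, key 0 _ hgB_meas hgB_nonneg hint_B, ENNReal.toReal_ofReal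
      (integral_nonneg fun z => mul_nonneg (GumbelAux.psi_nonneg hβ (hspos 0) z)
        (hgB_nonneg z)), hval_B]
  -- Event C
  have hSC : MeasurableSet {p : ℝ × ℝ | p.2 < p.1} :=
    measurableSet_lt measurable_snd measurable_fst
  have hC1 : ℙ {ω | Z 1 ω > Z 2 ω} = ∫⁻ x, μ 2 (Iio x) ∂(μ 1) := by
    have hCpre : {ω | Z 1 ω > Z 2 ω}
        = (fun ω => (Z 1 ω, Z 2 ω)) ⁻¹' {p : ℝ × ℝ | p.2 < p.1} := rfl
    rw [hCpre, ← Measure.map_apply ((hmeas 1).prodMk (hmeas 2)) hSC,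
      law_pair 1 2 (by decide), Measure.prod_apply hSC]
    refine lintegral_congr fun x => ?_
    have hpre : (Prod.mk x ⁻¹' {p : ℝ × ℝ | p.2 < p.1}) = Iio x := rfl
    rw [hpre]
  have hgC_meas : Measurable (fun x : ℝ => exp (-(s 2 * exp (-x / β)))) := by fun_prop
  have hgC_nonneg : ∀ x : ℝ, 0 ≤ exp (-(s 2 * exp (-x / β))) := fun x => exp_nonneg _
  have hint_C : Integrable (fun z => GumbelAux.ψ β (s 1) z * exp (-(s 2 * exp (-z / β)))) :=
    GumbelAux.integrable_psi_mul hβ (hspos 1) (hspos 2).le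
  have hPC : (ℙ {ω | Z 1 ω > Z 2 ω}).toReal = s 1 / (s 1 + s 2) := by
    rw [hC1]
    have heq : ∫⁻ x, μ 2 (Iio x) ∂(μ 1)
        = ∫⁻ x, ENNReal.ofReal (exp (-(s 2 * exp (-x / β)))) ∂(μ 1) := by
      refine lintegral_congr fun x => ?_
      rw [hIio 2 x]
    rw [heq, key 1 _ hgC_meas hgC_nonneg hint_C, ENNReal.toReal_ofReal
      (integral_nonneg fun z => mul_nonneg (GumbelAux.psi_nonneg hβ (hspos 1) z)
        (hgC_nonneg z)), GumbelAux.integral_psi_mul hβ (hspos 1) (hspos 2).le]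
  -- conclusion
  have d1 : (0:ℝ) < s 1 + s 2 := by have := hspos 1; have := hspos 2; linarith
  have d2 : (0:ℝ) < s 1 + (s 0 + s 2) := by have := hspos 0; have := hspos 1; have := hspos 2; linarith
  have d3 : (0:ℝ) < s 0 + s 1 + s 2 := by have := hspos 0; have := hspos 1; have := hspos 2; linarith
  have d4 : (0:ℝ) < s 0 + (s 1 + s 2) := by linarith
  constructor
  · rw [hPA]
    field_simp
    ring
  · rw [hPA, hPB, hPC]
    field_simp
    ring
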